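/- There exists W' ⊆ W with ∑_{w∈W'} w = K if and only if the W-votes in the maximin construction can be replaced (each by an arbitrary linear order over {p,a,b,c}) so that p wins the resulting weighted maximin election with tie-breaking p ≻ a ≻ b ≻ c. -/

import Mathlib

/-- The four candidates. -/
inductive Cand : Type
  | p | a | b | c
deriving DecidableEq

open Cand

/-- Weighted pairwise margin `D(x,y)`: total weight preferring `x` to `y` minus total
weight preferring `y` to `x` (each vote is a pair (weight, full ranking list)). -/
def marg (E : Multiset (ℕ × List Cand)) (x y : Cand) : ℤ :=
  (E.map fun v => if v.2.idxOf x < v.2.idxOf y then (v.1 : ℤ) else -(v.1 : ℤ)).sum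

/-- Maximin score: minimum pairwise margin against the other candidates. -/
def maximinScore (E : Multiset (ℕ × List Cand)) : Cand → ℤ
  | Cand.p => min (marg E Cand.p Cand.a) (min (marg E Cand.p Cand.b) (marg E Cand.p Cand.c))
  | Cand.a => min (marg E Cand.a Cand.p) (min (marg E Cand.a Cand.b) (marg E Cand.a Cand.c))
  | Cand.b => min (marg E Cand.b Cand.p) (min (marg E Cand.b Cand.a) (marg E Cand.b Cand.c))
  | Cand.c => min (marg E Cand.c Cand.p) (min (marg E Cand.c Cand.a) (marg E Cand.c Cand.b))

/-- `x` wins w.r.t. a score function and a tie-breaking priority order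
(lower priority value = preferred by the tie-breaking order). -/
def Wins {S : Type} [LinearOrder S] (score : Cand → S) (prio : Cand → ℕ) (x : Cand) : Prop :=
  ∀ y, y ≠ x → score y < score x ∨ (score y = score x ∧ prio x < prio y)

/-- Tie-breaking order `p ≻ a ≻ b ≻ c`. -/
def prioPABC : Cand → ℕ
  | Cand.p => 0
  | Cand.a => 1
  | Cand.b => 2
  | Cand.c => 3


lemma marg_add (E₁ E₂ : Multiset (ℕ × List Cand)) (x y : Cand) :
    marg (E₁ + E₂) x y = marg E₁ x y + marg E₂ x y := by
  simp [marg]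

lemma marg_map_const (S : Multiset ℕ) (L : List Cand) (x y : Cand) :
    marg (S.map fun w => (w, L)) x y
      = if L.idxOf x < L.idxOf y then ((S.sum:ℤ)) else -(S.sum:ℤ) := by
  simp only [marg, Multiset.map_map, Function.comp]
  split <;> simp [Multiset.sum_map_neg']

def Fsum (V : Multiset (ℕ × List Cand)) (x y : Cand) : ℕ :=
  ((V.filter (fun v => v.2.idxOf x < v.2.idxOf y)).map (fun v => v.1)).sum

lemma Fsum_def (V : Multiset (ℕ × List Cand)) (x y : Cand) :
    ((V.filter (fun v => v.2.idxOf x < v.2.idxOf y)).map (fun v => v.1)).sum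
      = Fsum V x y := rfl

lemma marg_eq_F (V : Multiset (ℕ × List Cand)) (x y : Cand) :
    marg V x y = 2 * (Fsum V x y : ℤ) - (((V.map (fun v => v.1)).sum : ℕ) : ℤ) := by
  induction V using Multiset.induction_on with
  | empty => simp [marg, Fsum]
  | cons v s ih =>
    by_cases h : v.2.idxOf x < v.2.idxOf y <;>
      simp [marg, Fsum, Multiset.filter_cons, h] at ih ⊢ <;> omega

lemma idx_lt (l : List Cand) (hl : l.Perm [p,a,b,c]) (x y : Cand) (hxy : x ≠ y)
    (h : ¬ l.idxOf x < l.idxOf y) : l.idxOf y < l.idxOf x := by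
  have hx : x ∈ l := hl.mem_iff.mpr (by cases x <;> simp)
  have hy : y ∈ l := hl.mem_iff.mpr (by cases y <;> simp)
  have : l.idxOf x ≠ l.idxOf y := fun h' => hxy ((List.idxOf_inj hx).mp h')
  omega

lemma Fsum_compl (V : Multiset (ℕ × List Cand)) (hperm : ∀ v ∈ V, v.2.Perm [p,a,b,c])
    (x y : Cand) (hxy : x ≠ y) :
    Fsum V x y + Fsum V y x = (V.map (fun v => v.1)).sum := by
  induction V using Multiset.induction_on with
  | empty => simp [Fsum]
  | cons v s ih =>
    have hv := hperm v (Multiset.mem_cons_self v s)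
    have ih' := ih (fun w hw => hperm w (Multiset.mem_cons_of_mem hw))
    by_cases h : v.2.idxOf x < v.2.idxOf y
    · have h2 : ¬ v.2.idxOf y < v.2.idxOf x := by omega
      simp [Fsum, Multiset.filter_cons, h, h2] at ih' ⊢; omega
    · have h2 : v.2.idxOf y < v.2.idxOf x := idx_lt v.2 hv x y hxy h
      simp [Fsum, Multiset.filter_cons, h, h2] at ih' ⊢; omega

lemma Fsum_mono (V : Multiset (ℕ × List Cand)) (x y z w : Cand)
    (h : ∀ v ∈ V, v.2.idxOf x < v.2.idxOf y → v.2.idxOf z < v.2.idxOf w) :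
    Fsum V x y ≤ Fsum V z w := by
  induction V using Multiset.induction_on with
  | empty => simp [Fsum]
  | cons v s ih =>
    have hv := h v (Multiset.mem_cons_self v s)
    have ih' := ih (fun u hu => h u (Multiset.mem_cons_of_mem hu))
    by_cases h1 : v.2.idxOf x < v.2.idxOf y
    · have h2 := hv h1
      simp [Fsum, Multiset.filter_cons, h1, h2] at ih' ⊢; omega
    · by_cases h2 : v.2.idxOf z < v.2.idxOf w <;>
        simp [Fsum, Multiset.filter_cons, h1, h2] at ih' ⊢ <;> omega

lemma Fsum_zero (V : Multiset (ℕ × List Cand)) (hpos : ∀ v ∈ V, 0 < v.1)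
    (x y : Cand) (h : Fsum V x y = 0) :
    ∀ v ∈ V, ¬ v.2.idxOf x < v.2.idxOf y := by
  intro v hv hlt
  have hmem : v ∈ V.filter (fun v => v.2.idxOf x < v.2.idxOf y) :=
    Multiset.mem_filter.mpr ⟨hv, hlt⟩
  have h1 : v.1 ∈ (V.filter (fun v => v.2.idxOf x < v.2.idxOf y)).map (fun v => v.1) :=
    Multiset.mem_map_of_mem _ hmem
  have h2 := Multiset.sum_eq_zero_iff.mp h _ h1
  exact absurd h2 (by have := hpos v hv; omega)

lemma Fsum_full (V : Multiset (ℕ × List Cand)) (x y : Cand)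
    (h : ∀ v ∈ V, v.2.idxOf x < v.2.idxOf y) :
    Fsum V x y = (V.map (fun v => v.1)).sum := by
  unfold Fsum
  rw [Multiset.filter_eq_self.mpr h]

def fixcoef : Cand → Cand → ℤ
  | Cand.p, _ => -3
  | Cand.a, Cand.p => 3
  | Cand.a, Cand.a => -3
  | Cand.a, Cand.b => 1
  | Cand.a, Cand.c => -1
  | Cand.b, Cand.p => 3
  | Cand.b, Cand.a => -1
  | Cand.b, Cand.b => -3
  | Cand.b, Cand.c => -1
  | Cand.c, Cand.p => 3
  | Cand.c, Cand.a => 1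
  | Cand.c, Cand.b => 1
  | Cand.c, Cand.c => -3

lemma margfix (K : ℕ) (x y : Cand) :
    marg ({(K, [c,a,b,p]), (K, [b,c,a,p]), (K, [a,c,b,p])} : Multiset (ℕ × List Cand)) x y
      = fixcoef x y * K := by
  cases x <;> cases y <;>
    simp (config := { decide := true }) [marg, fixcoef] <;> ring

lemma msP (E : Multiset (ℕ × List Cand)) :
    maximinScore E Cand.p
      = min (marg E Cand.p Cand.a) (min (marg E Cand.p Cand.b) (marg E Cand.p Cand.c)) := rfl
lemma msA (E : Multiset (ℕ × List Cand)) :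
    maximinScore E Cand.a
      = min (marg E Cand.a Cand.p) (min (marg E Cand.a Cand.b) (marg E Cand.a Cand.c)) := rfl
lemma msB (E : Multiset (ℕ × List Cand)) :
    maximinScore E Cand.b
      = min (marg E Cand.b Cand.p) (min (marg E Cand.b Cand.a) (marg E Cand.b Cand.c)) := rfl
lemma msC (E : Multiset (ℕ × List Cand)) :
    maximinScore E Cand.c
      = min (marg E Cand.c Cand.p) (min (marg E Cand.c Cand.a) (marg E Cand.c Cand.b)) := rfl

lemma wins_lemma (E : Multiset (ℕ × List Cand)) (K : ℕ)
    (spa : marg E p a = -(K:ℤ)) (spb : marg E p b = -(K:ℤ)) (spc : marg E p c = -(K:ℤ))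
    (sap : marg E a p = (K:ℤ)) (sab : marg E a b = (K:ℤ)) (sac : marg E a c = -(K:ℤ))
    (sbp : marg E b p = (K:ℤ)) (sba : marg E b a = -(K:ℤ)) (sbc : marg E b c = (K:ℤ))
    (scp : marg E c p = (K:ℤ)) (sca : marg E c a = (K:ℤ)) (scb : marg E c b = -(K:ℤ)) :
    Wins (maximinScore E) prioPABC p := by
  intro y hy
  cases y with
  | p => exact absurd rfl hy
  | a =>
      right
      have h1 : maximinScore E Cand.a = maximinScore E Cand.p := by
        simp only [maximinScore, spa, spb, spc, sap, sab, sac]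
        clear spa spb spc sap sab sac sbp sba sbc scp sca scb
        omega
      have h2 : prioPABC Cand.p < prioPABC Cand.a := by decide
      exact ⟨h1, h2⟩
  | b =>
      right
      have h1 : maximinScore E Cand.b = maximinScore E Cand.p := by
        simp only [maximinScore, spa, spb, spc, sbp, sba, sbc]
        clear spa spb spc sap sab sac sbp sba sbc scp sca scb
        omega
      have h2 : prioPABC Cand.p < prioPABC Cand.b := by decide
      exact ⟨h1, h2⟩
  | c =>
      right
      have h1 : maximinScore E Cand.c = maximinScore E Cand.p := by
        simp only [maximinScore, spa, spb, spc, scp, sca, scb]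
        clear spa spb spc sap sab sac sbp sba sbc scp sca scb
        omega
      have h2 : prioPABC Cand.p < prioPABC Cand.c := by decide
      exact ⟨h1, h2⟩

attribute [irreducible] marg maximinScore Fsum

set_option maxHeartbeats 1000000 in
/-- Main equivalence of the maximin hardness reduction: `W` (a multiset of positive
integers with `∑ W = 2K`) has a sub-multiset summing to `K` iff the `W`-votes (originally
`p ≻ a ≻ b ≻ c`) can be replaced by arbitrary linear orders over `{p,a,b,c}` so that `p`
wins the weighted maximin election (fixed votes `c ≻ a ≻ b ≻ p`, `b ≻ c ≻ a ≻ p`,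
`a ≻ c ≻ b ≻ p` each of weight `K`) with tie-breaking `p ≻ a ≻ b ≻ c`. -/
theorem stmt_6 (K : ℕ) (hK : 0 < K) (W : Multiset ℕ)
    (hpos : ∀ w ∈ W, 0 < w) (hsum : W.sum = 2 * K) :
    (∃ W' ≤ W, W'.sum = K) ↔
      (∃ V : Multiset (ℕ × List Cand), V.map Prod.fst = W ∧
        (∀ v ∈ V, v.2.Perm [p, a, b, c]) ∧
        Wins (maximinScore
          (V + {(K, [c, a, b, p]), (K, [b, c, a, p]), (K, [a, c, b, p])})) prioPABC p) := by
  constructor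
  · rintro ⟨W', hle, hW'⟩
    obtain ⟨T, rfl⟩ := Multiset.le_iff_exists_add.mp hle
    have hT : T.sum = K := by
      have := hsum; simp only [Multiset.sum_add] at this; omega
    set V := W'.map (fun w => (w, [p,a,b,c])) + T.map (fun w => (w, [p,b,c,a])) with hV
    have hmargs : ∀ x y : Cand,
        marg (V + ({(K, [c,a,b,p]), (K, [b,c,a,p]), (K, [a,c,b,p])} : Multiset (ℕ × List Cand))) x y
        = ((if ([p,a,b,c]:List Cand).idxOf x < ([p,a,b,c]:List Cand).idxOf y then (K:ℤ) else -K)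
          + (if ([p,b,c,a]:List Cand).idxOf x < ([p,b,c,a]:List Cand).idxOf y then (K:ℤ) else -K)
          + marg ({(K, [c,a,b,p]), (K, [b,c,a,p]), (K, [a,c,b,p])} : Multiset (ℕ × List Cand)) x y) := by
      intro x y
      rw [hV, marg_add, marg_add, marg_map_const, marg_map_const, hW', hT]
    refine ⟨V, ?_, ?_, ?_⟩
    · simp [hV, Multiset.map_map, Function.comp]
    · intro v hv
      rw [hV, Multiset.mem_add] at hv
      rcases hv with hv | hv <;> obtain ⟨w, hw, rfl⟩ := Multiset.mem_map.mp hv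
      · exact List.Perm.refl _
      · exact (by decide : ([p,b,c,a] : List Cand).Perm [p,a,b,c])
    · 
      have spa : marg (V + ({(K, [c,a,b,p]), (K, [b,c,a,p]), (K, [a,c,b,p])} : Multiset (ℕ × List Cand))) p a = -(K:ℤ) := by
        rw [hmargs, margfix]
        simp (config := { decide := true }) [fixcoef]
        try ring
      have spb : marg (V + ({(K, [c,a,b,p]), (K, [b,c,a,p]), (K, [a,c,b,p])} : Multiset (ℕ × List Cand))) p b = -(K:ℤ) := by
        rw [hmargs, margfix]
        simp (config := { decide := true }) [fixcoef]
        try ring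
      have spc : marg (V + ({(K, [c,a,b,p]), (K, [b,c,a,p]), (K, [a,c,b,p])} : Multiset (ℕ × List Cand))) p c = -(K:ℤ) := by
        rw [hmargs, margfix]
        simp (config := { decide := true }) [fixcoef]
        try ring
      have sap : marg (V + ({(K, [c,a,b,p]), (K, [b,c,a,p]), (K, [a,c,b,p])} : Multiset (ℕ × List Cand))) a p = (K:ℤ) := by
        rw [hmargs, margfix]
        simp (config := { decide := true }) [fixcoef]
        try ring
      have sab : marg (V + ({(K, [c,a,b,p]), (K, [b,c,a,p]), (K, [a,c,b,p])} : Multiset (ℕ × List Cand))) a b = (K:ℤ) := by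
        rw [hmargs, margfix]
        simp (config := { decide := true }) [fixcoef]
        try ring
      have sac : marg (V + ({(K, [c,a,b,p]), (K, [b,c,a,p]), (K, [a,c,b,p])} : Multiset (ℕ × List Cand))) a c = -(K:ℤ) := by
        rw [hmargs, margfix]
        simp (config := { decide := true }) [fixcoef]
        try ring
      have sbp : marg (V + ({(K, [c,a,b,p]), (K, [b,c,a,p]), (K, [a,c,b,p])} : Multiset (ℕ × List Cand))) b p = (K:ℤ) := by
        rw [hmargs, margfix]
        simp (config := { decide := true }) [fixcoef]
        try ring
      have sba : marg (V + ({(K, [c,a,b,p]), (K, [b,c,a,p]), (K, [a,c,b,p])} : Multiset (ℕ × List Cand))) b a = -(K:ℤ) := by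
        rw [hmargs, margfix]
        simp (config := { decide := true }) [fixcoef]
        try ring
      have sbc : marg (V + ({(K, [c,a,b,p]), (K, [b,c,a,p]), (K, [a,c,b,p])} : Multiset (ℕ × List Cand))) b c = (K:ℤ) := by
        rw [hmargs, margfix]
        simp (config := { decide := true }) [fixcoef]
        try ring
      have scp : marg (V + ({(K, [c,a,b,p]), (K, [b,c,a,p]), (K, [a,c,b,p])} : Multiset (ℕ × List Cand))) c p = (K:ℤ) := by
        rw [hmargs, margfix]
        simp (config := { decide := true }) [fixcoef]
        try ring
      have sca : marg (V + ({(K, [c,a,b,p]), (K, [b,c,a,p]), (K, [a,c,b,p])} : Multiset (ℕ × List Cand))) c a = (K:ℤ) := by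
        rw [hmargs, margfix]
        simp (config := { decide := true }) [fixcoef]
        try ring
      have scb : marg (V + ({(K, [c,a,b,p]), (K, [b,c,a,p]), (K, [a,c,b,p])} : Multiset (ℕ × List Cand))) c b = -(K:ℤ) := by
        rw [hmargs, margfix]
        simp (config := { decide := true }) [fixcoef]
        try ring
      exact wins_lemma _ K spa spb spc sap sab sac sbp sba sbc scp sca scb
  · rintro ⟨V, hfst, hperm, hwin⟩
    have hpos' : ∀ v ∈ V, 0 < v.1 := by
      intro v hv
      refine hpos v.1 ?_
      rw [← hfst]
      exact Multiset.mem_map_of_mem _ hv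
    have htot : (V.map (fun v => v.1)).sum = 2 * K := by
      have h0 : V.map (fun v : ℕ × List Cand => v.1) = W := hfst
      rw [h0, hsum]
    have hcompl : ∀ x y : Cand, x ≠ y → Fsum V x y + Fsum V y x = 2*K := by
      intro x y h; rw [Fsum_compl V hperm x y h, htot]
    set E := V + ({(K, [c,a,b,p]), (K, [b,c,a,p]), (K, [a,c,b,p])} : Multiset (ℕ × List Cand)) with hE
    have mE : ∀ x y : Cand, marg E x y
        = 2*(Fsum V x y : ℤ) - 2*(K:ℤ) + fixcoef x y * K := by
      intro x y
      rw [hE, marg_add, marg_eq_F, htot, margfix]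
      push_cast
      ring
    have hA : maximinScore E Cand.a ≤ maximinScore E Cand.p := by
      rcases hwin Cand.a (by decide) with h | h
      · exact le_of_lt h
      · exact le_of_eq h.1
    have hB : maximinScore E Cand.b ≤ maximinScore E Cand.p := by
      rcases hwin Cand.b (by decide) with h | h
      · exact le_of_lt h
      · exact le_of_eq h.1
    have hC : maximinScore E Cand.c ≤ maximinScore E Cand.p := by
      rcases hwin Cand.c (by decide) with h | h
      · exact le_of_lt h
      · exact le_of_eq h.1
    rw [msA, msP, mE a p, mE a b, mE a c, mE p a, mE p b, mE p c] at hA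
    rw [msB, msP, mE b p, mE b a, mE b c, mE p a, mE p b, mE p c] at hB
    rw [msC, msP, mE c p, mE c a, mE c b, mE p a, mE p b, mE p c] at hC
    simp only [fixcoef] at hA hB hC
    have c1 := hcompl p a (by decide)
    have cab := hcompl a b (by decide)
    have hcase : Fsum V c a = 0 ∨ Fsum V c b = 0 := by omega
    rcases hcase with hca | hcb
    · exfalso
      have hall : ∀ v ∈ V, v.2.idxOf a < v.2.idxOf c := by
        intro v hv
        exact idx_lt v.2 (hperm v hv) c a (by decide) (Fsum_zero V hpos' c a hca v hv)
      have hFac : Fsum V a c = 2 * K := by rw [Fsum_full V a c hall, htot]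
      have hab0 : Fsum V a b = 0 := by omega
      have hallba : ∀ v ∈ V, v.2.idxOf b < v.2.idxOf a := by
        intro v hv
        exact idx_lt v.2 (hperm v hv) a b (by decide) (Fsum_zero V hpos' a b hab0 v hv)
      have hallbc : ∀ v ∈ V, v.2.idxOf b < v.2.idxOf c := fun v hv =>
        Nat.lt_trans (hallba v hv) (hall v hv)
      have hFbc : Fsum V b c = 2*K := by rw [Fsum_full V b c hallbc, htot]
      have hFba : Fsum V b a = 2*K := by rw [Fsum_full V b a hallba, htot]
      omega
    · have hallbc : ∀ v ∈ V, v.2.idxOf b < v.2.idxOf c := by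
        intro v hv
        exact idx_lt v.2 (hperm v hv) c b (by decide) (Fsum_zero V hpos' c b hcb v hv)
      have hFbc : Fsum V b c = 2*K := by rw [Fsum_full V b c hallbc, htot]
      have hFacK : Fsum V a c ≤ K := by
        have hsub : Fsum V a b = 0 ∨ Fsum V a c ≤ K := by omega
        rcases hsub with hab0 | h
        · exfalso
          have hallba : ∀ v ∈ V, v.2.idxOf b < v.2.idxOf a := by
            intro v hv
            exact idx_lt v.2 (hperm v hv) a b (by decide) (Fsum_zero V hpos' a b hab0 v hv)
          have hFba : Fsum V b a = 2*K := by rw [Fsum_full V b a hallba, htot]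
          omega
        · exact h
      have hFbaK : Fsum V b a ≤ K := by omega
      have hmono : Fsum V a b ≤ Fsum V a c :=
        Fsum_mono V a b a c (fun v hv h => Nat.lt_trans h (hallbc v hv))
      have hFab : Fsum V a b = K := by omega
      refine ⟨(V.filter (fun v => v.2.idxOf a < v.2.idxOf b)).map (fun v => v.1), ?_, ?_⟩
      · calc (V.filter (fun v => v.2.idxOf a < v.2.idxOf b)).map (fun v => v.1)
            ≤ V.map (fun v => v.1) := Multiset.map_le_map (Multiset.filter_le _ _)
          _ = W := hfst
      · rw [Fsum_def V a b, hFab]
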